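/- Let φ : ℝ → ℝ be Lipschitz with constant K > 0 and 1-periodic, let J = (−1/K, 1/K), and let p, q be coprime integers with q ≥ 1. Define γ^l_{p/q}(a) = inf {t : Trans(F_{t,a}) = p/q} and γ^r_{p/q}(a) = sup {t : Trans(F_{t,a}) = p/q}. Then for all a₀, a₁ ∈ J with a₀ ≠ a₁: −sup φ ≤ (γ^l_{p/q}(a₁) − γ^l_{p/q}(a₀))/(a₁ − a₀) ≤ −inf φ, and −sup φ ≤ (γ^r_{p/q}(a₁) − γ^r_{p/q}(a₀))/(a₁ − a₀) ≤ −inf φ. In particular γ^l_{p/q} and γ^r_{p/q} are Lipschitz continuous on J. -/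

import Mathlib

open Filter Topology Set

/-- `τ` is the translation number of `F`: for every `x`, `(F^[n] x - x)/n → τ`. -/
def IsTransNum (F : ℝ → ℝ) (τ : ℝ) : Prop :=
  ∀ x : ℝ, Filter.Tendsto (fun n : ℕ => (F^[n] x - x) / n) Filter.atTop (nhds τ)

lemma transnum_mono {F G : ℝ → ℝ} {τF τG : ℝ} (hF : Monotone F)
    (hFG : ∀ x, F x ≤ G x) (h1 : IsTransNum F τF) (h2 : IsTransNum G τG) : τF ≤ τG := by
  have key : ∀ n : ℕ, F^[n] 0 ≤ G^[n] 0 := by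
    intro n
    induction n with
    | zero => simp
    | succ n ih =>
      rw [Function.iterate_succ_apply', Function.iterate_succ_apply']
      exact (hF ih).trans (hFG _)
  refine le_of_tendsto_of_tendsto' (h1 0) (h2 0) fun n => ?_
  rcases Nat.eq_zero_or_pos n with h | h
  · simp [h]
  · have hn : (0:ℝ) < n := by exact_mod_cast h
    exact div_le_div_of_nonneg_right (sub_le_sub_right (key n) 0) hn.le

lemma transnum_translate (s : ℝ) : IsTransNum (fun x => x + s) s := by
  intro x
  have hit : ∀ n : ℕ, (fun x => x + s)^[n] x = x + n * s := by
    intro n; induction n with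
    | zero => simp
    | succ n ih => rw [Function.iterate_succ_apply', ih]; push_cast; ring
  have h : ∀ᶠ n : ℕ in atTop, ((fun x => x + s)^[n] x - x) / n = s := by
    filter_upwards [eventually_gt_atTop 0] with n hn
    have hn' : (n:ℝ) ≠ 0 := Nat.cast_ne_zero.mpr hn.ne'
    rw [hit]; field_simp; ring
  exact Tendsto.congr' (EventuallyEq.symm h) tendsto_const_nhds

lemma iterate_add_const {f : ℝ → ℝ} {c : ℝ} (h : ∀ y, f (y + c) = f y + c) :
    ∀ (n : ℕ) (y : ℝ), f^[n] (y + c) = f^[n] y + c := by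
  intro n
  induction n with
  | zero => simp
  | succ n ih =>
    intro y
    rw [Function.iterate_succ_apply', Function.iterate_succ_apply', ih, h]

lemma transnum_of_periodic_pt {f : ℝ → ℝ} {τ : ℝ} (hτ : IsTransNum f τ)
    (hint : ∀ (y : ℝ) (k : ℤ), f (y + k) = f y + k)
    {p : ℤ} {q : ℕ} (hq : 0 < q) {x : ℝ} (hx : f^[q] x = x + p) : τ = (p:ℝ)/q := by
  have hiter : ∀ n : ℕ, f^[n * q] x = x + n * p := by
    intro n
    induction n with
    | zero => simp
    | succ n ih =>
      have h1 : (n+1) * q = q + n * q := by ring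
      rw [h1, Function.iterate_add_apply, ih]
      have h2 : x + (n:ℝ) * p = x + ((n * p : ℤ) : ℝ) := by push_cast; ring
      rw [h2, iterate_add_const (fun y => hint y _) q x, hx]
      push_cast; ring
  have h1 : Tendsto (fun n : ℕ => n * q) atTop atTop :=
    tendsto_atTop_mono (fun n => Nat.le_mul_of_pos_right n hq) tendsto_id
  have h2 := (hτ x).comp h1
  have h3 : (fun n : ℕ => (f^[n] x - x) / n) ∘ (fun n => n * q) =ᶠ[atTop]
      fun _ => (p:ℝ)/q := by
    filter_upwards [eventually_gt_atTop 0] with n hn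
    have hn' : (n:ℝ) ≠ 0 := Nat.cast_ne_zero.mpr hn.ne'
    have hq' : (q:ℝ) ≠ 0 := Nat.cast_ne_zero.mpr hq.ne'
    simp only [Function.comp_apply]
    rw [hiter]
    push_cast
    field_simp
    ring
  exact tendsto_nhds_unique (h2.congr' h3) tendsto_const_nhds

theorem stmt_5 (φ : ℝ → ℝ) (K : ℝ) (hK : 0 < K)
    (hLip : ∀ x y : ℝ, |φ x - φ y| ≤ K * |x - y|)
    (hper : ∀ x : ℝ, φ (x + 1) = φ x)
    (τ : ℝ → ℝ → ℝ)
    (hτ : ∀ t : ℝ, ∀ a ∈ Set.Ioo (-(1 / K)) (1 / K),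
      IsTransNum (fun x => x + t + a * φ x) (τ t a))
    (p : ℤ) (q : ℕ) (hq : 1 ≤ q) (hpq : Nat.Coprime p.natAbs q) :
    ∀ a₀ ∈ Set.Ioo (-(1 / K)) (1 / K), ∀ a₁ ∈ Set.Ioo (-(1 / K)) (1 / K), a₀ ≠ a₁ →
      (-sSup (Set.range φ) ≤
          (sInf {t : ℝ | τ t a₁ = (p : ℝ) / (q : ℝ)} -
            sInf {t : ℝ | τ t a₀ = (p : ℝ) / (q : ℝ)}) / (a₁ - a₀) ∧
        (sInf {t : ℝ | τ t a₁ = (p : ℝ) / (q : ℝ)} -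
            sInf {t : ℝ | τ t a₀ = (p : ℝ) / (q : ℝ)}) / (a₁ - a₀) ≤
          -sInf (Set.range φ)) ∧
      (-sSup (Set.range φ) ≤
          (sSup {t : ℝ | τ t a₁ = (p : ℝ) / (q : ℝ)} -
            sSup {t : ℝ | τ t a₀ = (p : ℝ) / (q : ℝ)}) / (a₁ - a₀) ∧
        (sSup {t : ℝ | τ t a₁ = (p : ℝ) / (q : ℝ)} -
            sSup {t : ℝ | τ t a₀ = (p : ℝ) / (q : ℝ)}) / (a₁ - a₀) ≤
          -sInf (Set.range φ)) := by
  have hq0 : 0 < q := hq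
  have hqR : (0:ℝ) < q := by exact_mod_cast hq0
  set J : Set ℝ := Set.Ioo (-(1/K)) (1/K) with hJ
  set r : ℝ := (p:ℝ)/q with hr
  -- continuity of φ
  have hφc : Continuous φ := by
    have : LipschitzWith (Real.toNNReal K) φ := by
      apply LipschitzWith.of_dist_le_mul
      intro x y
      rw [Real.dist_eq, Real.dist_eq, Real.coe_toNNReal K hK.le]
      exact hLip x y
    exact this.continuous
  -- integer periodicity
  have hper' : ∀ (x : ℝ) (k : ℤ), φ (x + k) = φ x := by
    intro x k
    induction k using Int.induction_on with
    | zero => simp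
    | succ n ih =>
      have h : (x + ((n:ℤ) + 1 : ℤ) : ℝ) = (x + (n:ℤ)) + 1 := by push_cast; ring
      rw [h, hper, ih]
    | pred n ih =>
      have h : (x + (-(n:ℤ) - 1 : ℤ) : ℝ) + 1 = x + (-(n:ℤ) : ℤ) := by push_cast; ring
      calc φ (x + (-(n:ℤ) - 1 : ℤ)) = φ ((x + (-(n:ℤ) - 1 : ℤ)) + 1) := (hper _).symm
        _ = φ (x + (-(n:ℤ) : ℤ)) := by rw [h]
        _ = φ x := ih
  -- boundedness of φ
  set B : ℝ := |φ 0| + K with hB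
  have hbdd : ∀ x, |φ x| ≤ B := by
    intro x
    have h1 : φ x = φ (Int.fract x) := by
      have h2 := hper' (Int.fract x) ⌊x⌋
      rw [Int.fract_add_floor] at h2
      exact h2
    rw [h1]
    calc |φ (Int.fract x)| ≤ |φ (Int.fract x) - φ 0| + |φ 0| := by
          have := abs_add_le (φ (Int.fract x) - φ 0) (φ 0); simpa using this
      _ ≤ K * |Int.fract x - 0| + |φ 0| := by linarith [hLip (Int.fract x) 0]
      _ ≤ K * 1 + |φ 0| := by
          have h3 : |Int.fract x - 0| ≤ 1 := by
            rw [sub_zero, abs_of_nonneg (Int.fract_nonneg x)]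
            exact (Int.fract_lt_one x).le
          nlinarith
      _ = B := by rw [hB]; ring
  have hB0 : 0 ≤ B := (abs_nonneg _).trans (hbdd 0)
  have hbddA : BddAbove (Set.range φ) := by
    refine ⟨B, ?_⟩; rintro _ ⟨x, rfl⟩; exact (le_abs_self _).trans (hbdd x)
  have hbddB : BddBelow (Set.range φ) := by
    refine ⟨-B, ?_⟩; rintro _ ⟨x, rfl⟩
    have := (neg_abs_le (φ x)); linarith [hbdd x]
  set m : ℝ := sInf (Set.range φ) with hm'
  set M : ℝ := sSup (Set.range φ) with hM'
  have hm : ∀ x, m ≤ φ x := fun x => csInf_le hbddB ⟨x, rfl⟩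
  have hM : ∀ x, φ x ≤ M := fun x => le_csSup hbddA ⟨x, rfl⟩
  -- monotonicity of F
  have hmono : ∀ (t : ℝ), ∀ a ∈ J, Monotone (fun x => x + t + a * φ x) := by
    intro t a ha x y hxy
    have h1 : |a| < 1/K := abs_lt.mpr ⟨ha.1, ha.2⟩
    have haK : |a| * K ≤ 1 := by
      have h2 := mul_lt_mul_of_pos_right h1 hK
      rw [one_div, inv_mul_cancel₀ hK.ne'] at h2
      exact h2.le
    have h2 : a * (φ x - φ y) ≤ y - x := by
      calc a * (φ x - φ y) ≤ |a * (φ x - φ y)| := le_abs_self _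
        _ = |a| * |φ x - φ y| := abs_mul _ _
        _ ≤ |a| * (K * |x - y|) := by
            exact mul_le_mul_of_nonneg_left (hLip x y) (abs_nonneg a)
        _ = (|a| * K) * |x - y| := by ring
        _ ≤ 1 * |x - y| := mul_le_mul_of_nonneg_right haK (abs_nonneg _)
        _ = y - x := by rw [one_mul, abs_sub_comm, abs_of_nonneg (by linarith)]
    dsimp only
    linarith
  -- F commutes with integer translations
  have hFint : ∀ (t a : ℝ), ∀ (y : ℝ) (k : ℤ),
      (fun x => x + t + a * φ x) (y + (k:ℝ)) = (fun x => x + t + a * φ x) y + k := by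
    intro t a y k
    dsimp only
    rw [hper' y k]
    ring
  -- translation-number bounds
  have hτbound : ∀ (t : ℝ), ∀ a ∈ J, t - |a| * B ≤ τ t a ∧ τ t a ≤ t + |a| * B := by
    intro t a ha
    have hax : ∀ x, -( |a| * B) ≤ a * φ x ∧ a * φ x ≤ |a| * B := by
      intro x
      have h1 : |a * φ x| ≤ |a| * B := by
        rw [abs_mul]
        exact mul_le_mul_of_nonneg_left (hbdd x) (abs_nonneg a)
      exact ⟨neg_le_of_abs_le h1, le_of_abs_le h1⟩
    constructor
    · refine transnum_mono (fun x y hxy => by simpa using hxy) (fun x => ?_)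
        (transnum_translate (t - |a| * B)) (hτ t a ha)
      have := (hax x).1; linarith
    · refine transnum_mono (hmono t a ha) (fun x => ?_) (hτ t a ha)
        (transnum_translate (t + |a| * B))
      have := (hax x).2; linarith
  -- monotonicity of τ in t
  have hτmono : ∀ a ∈ J, ∀ s t : ℝ, s ≤ t → τ s a ≤ τ t a := by
    intro a ha s t hst
    exact transnum_mono (hmono s a ha) (fun x => by linarith)
      (hτ s a ha) (hτ t a ha)
  -- fibers
  set S : ℝ → Set ℝ := fun a => {t : ℝ | τ t a = r} with hS
  have hSsub : ∀ a ∈ J, S a ⊆ Set.Icc (r - |a| * B) (r + |a| * B) := by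
    intro a ha t ht
    have h1 := hτbound t a ha
    have h2 : τ t a = r := ht
    constructor <;> [linarith [h1.2, h2]; linarith [h1.1, h2]]
  have hSbddB : ∀ a ∈ J, BddBelow (S a) := fun a ha =>
    (bddBelow_Icc).mono (hSsub a ha)
  have hSbddA : ∀ a ∈ J, BddAbove (S a) := fun a ha =>
    (bddAbove_Icc).mono (hSsub a ha)
  -- nonemptiness of fibers
  have hSne : ∀ a ∈ J, (S a).Nonempty := by
    intro a ha
    set C : ℝ := |a| * B with hC
    have hC0 : 0 ≤ C := by positivity
    set G : ℕ → ℝ → ℝ := fun n t => (fun x => x + t + a * φ x)^[n] 0 with hG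
    have hcont : ∀ n : ℕ, Continuous (G n) := by
      intro n
      induction n with
      | zero => simpa [hG] using continuous_const
      | succ n ih =>
        have : G (n+1) = fun t => G n t + t + a * φ (G n t) := by
          funext t
          simp only [hG, Function.iterate_succ_apply']
        rw [this]
        exact (ih.add continuous_id).add (continuous_const.mul (hφc.comp ih))
    have hub : ∀ (t : ℝ) (n : ℕ), G n t ≤ n * (t + C) ∧ n * (t - C) ≤ G n t := by
      intro t n
      induction n with
      | zero => simp [hG]
      | succ n ih =>
        have h1 : G (n+1) t = G n t + t + a * φ (G n t) := by
          simp only [hG, Function.iterate_succ_apply']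
        have h2 : |a * φ (G n t)| ≤ C := by
          rw [hC, abs_mul]
          exact mul_le_mul_of_nonneg_left (hbdd _) (abs_nonneg a)
        have h3 := le_of_abs_le h2
        have h4 := neg_le_of_abs_le h2
        constructor
        · push_cast; nlinarith [ih.1]
        · push_cast; nlinarith [ih.2]
    have hiv : ∃ t ∈ Set.Icc (r - C) (r + C), G q t = (p:ℝ) := by
      have hle : r - C ≤ r + C := by linarith
      have key := intermediate_value_Icc hle (hcont q).continuousOn
      have hmem : (p:ℝ) ∈ Set.Icc (G q (r - C)) (G q (r + C)) := by
        constructor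
        · have := (hub (r - C) q).1
          have h5 : (q:ℝ) * (r - C + C) = p := by
            have he : r - C + C = r := by ring
            rw [he, hr]; field_simp
          linarith
        · have := (hub (r + C) q).2
          have h5 : (q:ℝ) * (r + C - C) = p := by
            have he : r + C - C = r := by ring
            rw [he, hr]; field_simp
          linarith
      obtain ⟨t, ht, hGt⟩ := key hmem
      exact ⟨t, ht, hGt⟩
    obtain ⟨t, _, hGt⟩ := hiv
    refine ⟨t, ?_⟩
    have hpt : (fun x => x + t + a * φ x)^[q] 0 = 0 + (p:ℝ) := by
      rw [zero_add]; exact hGt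
    exact transnum_of_periodic_pt (hτ t a ha) (hFint t a) hq0 hpt
  -- inf/sup principles
  have hD : ∀ a ∈ J, ∀ s : ℝ, r ≤ τ s a → sInf (S a) ≤ s := by
    intro a ha s hs
    obtain ⟨u, hu⟩ := hSne a ha
    rcases le_total s u with h | h
    · have h1 : τ s a ≤ r := by
        have := hτmono a ha s u h; rw [hu] at this; exact this
      exact csInf_le (hSbddB a ha) (le_antisymm h1 hs)
    · exact (csInf_le (hSbddB a ha) hu).trans h
  have hD' : ∀ a ∈ J, ∀ s : ℝ, τ s a ≤ r → s ≤ sSup (S a) := by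
    intro a ha s hs
    obtain ⟨u, hu⟩ := hSne a ha
    rcases le_total u s with h | h
    · have h1 : r ≤ τ s a := by
        have := hτmono a ha u s h; rw [hu] at this; exact this
      exact le_csSup (hSbddA a ha) (le_antisymm hs h1)
    · exact h.trans (le_csSup (hSbddA a ha) hu)
  -- the key estimates for a₀ < a₁
  have key : ∀ a₀ ∈ J, ∀ a₁ ∈ J, a₀ < a₁ →
      (sInf (S a₁) + (a₁ - a₀) * m ≤ sInf (S a₀) ∧
        sInf (S a₀) ≤ sInf (S a₁) + (a₁ - a₀) * M) ∧
      (sSup (S a₁) + (a₁ - a₀) * m ≤ sSup (S a₀) ∧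
        sSup (S a₀) ≤ sSup (S a₁) + (a₁ - a₀) * M) := by
    intro a₀ ha₀ a₁ ha₁ hlt
    have hδ0 : 0 < a₁ - a₀ := by linarith
    -- (i) t ∈ S a₀ → sInf (S a₁) ≤ t - δ*m
    have hi : ∀ t ∈ S a₀, sInf (S a₁) ≤ t - (a₁ - a₀) * m := by
      intro t ht
      apply hD a₁ ha₁
      have hcomp : τ t a₀ ≤ τ (t - (a₁ - a₀) * m) a₁ := by
        refine transnum_mono (hmono t a₀ ha₀) (fun x => ?_) (hτ t a₀ ha₀)
          (hτ (t - (a₁ - a₀) * m) a₁ ha₁)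
        have := mul_le_mul_of_nonneg_left (hm x) hδ0.le
        nlinarith
      rw [show τ t a₀ = r from ht] at hcomp; exact hcomp
    -- (ii) t ∈ S a₁ → sInf (S a₀) ≤ t + δ*M
    have hii : ∀ t ∈ S a₁, sInf (S a₀) ≤ t + (a₁ - a₀) * M := by
      intro t ht
      apply hD a₀ ha₀
      have hcomp : τ t a₁ ≤ τ (t + (a₁ - a₀) * M) a₀ := by
        refine transnum_mono (hmono t a₁ ha₁) (fun x => ?_) (hτ t a₁ ha₁)
          (hτ (t + (a₁ - a₀) * M) a₀ ha₀)
        have := mul_le_mul_of_nonneg_left (hM x) hδ0.le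
        nlinarith
      rw [show τ t a₁ = r from ht] at hcomp; exact hcomp
    -- (iii) t ∈ S a₁ → t + δ*m ≤ sSup (S a₀)
    have hiii : ∀ t ∈ S a₁, t + (a₁ - a₀) * m ≤ sSup (S a₀) := by
      intro t ht
      apply hD' a₀ ha₀
      have hcomp : τ (t + (a₁ - a₀) * m) a₀ ≤ τ t a₁ := by
        refine transnum_mono (hmono (t + (a₁ - a₀) * m) a₀ ha₀) (fun x => ?_)
          (hτ (t + (a₁ - a₀) * m) a₀ ha₀) (hτ t a₁ ha₁)
        have := mul_le_mul_of_nonneg_left (hm x) hδ0.le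
        nlinarith
      rw [show τ t a₁ = r from ht] at hcomp; exact hcomp
    -- (iv) t ∈ S a₀ → t - δ*M ≤ sSup (S a₁)
    have hiv : ∀ t ∈ S a₀, t - (a₁ - a₀) * M ≤ sSup (S a₁) := by
      intro t ht
      apply hD' a₁ ha₁
      have hcomp : τ (t - (a₁ - a₀) * M) a₁ ≤ τ t a₀ := by
        refine transnum_mono (hmono (t - (a₁ - a₀) * M) a₁ ha₁) (fun x => ?_)
          (hτ (t - (a₁ - a₀) * M) a₁ ha₁) (hτ t a₀ ha₀)
        have := mul_le_mul_of_nonneg_left (hM x) hδ0.le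
        nlinarith
      rw [show τ t a₀ = r from ht] at hcomp; exact hcomp
    refine ⟨⟨?_, ?_⟩, ?_, ?_⟩
    · -- sInf (S a₁) + δ m ≤ sInf (S a₀)
      have h1 : ∀ t ∈ S a₀, sInf (S a₁) + (a₁ - a₀) * m ≤ t := fun t ht => by
        have := hi t ht; linarith
      exact le_csInf (hSne a₀ ha₀) h1
    · -- sInf (S a₀) ≤ sInf (S a₁) + δ M
      have h1 : ∀ t ∈ S a₁, sInf (S a₀) - (a₁ - a₀) * M ≤ t := fun t ht => by
        have := hii t ht; linarith
      have h2 := le_csInf (hSne a₁ ha₁) h1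
      linarith
    · -- sSup (S a₁) + δ m ≤ sSup (S a₀)
      have h1 : ∀ t ∈ S a₁, t ≤ sSup (S a₀) - (a₁ - a₀) * m := fun t ht => by
        have := hiii t ht; linarith
      have h2 := csSup_le (hSne a₁ ha₁) h1
      linarith
    · -- sSup (S a₀) ≤ sSup (S a₁) + δ M
      have h1 : ∀ t ∈ S a₀, t ≤ sSup (S a₁) + (a₁ - a₀) * M := fun t ht => by
        have := hiv t ht; linarith
      exact csSup_le (hSne a₀ ha₀) h1
  -- conclude
  intro a₀ ha₀ a₁ ha₁ hne
  rcases lt_or_gt_of_ne hne with hlt | hlt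
  · obtain ⟨⟨h1, h2⟩, h3, h4⟩ := key a₀ ha₀ a₁ ha₁ hlt
    have hδ0 : (0:ℝ) < a₁ - a₀ := by linarith
    constructor
    · constructor
      · rw [le_div_iff₀ hδ0]; linarith
      · rw [div_le_iff₀ hδ0]; linarith
    · constructor
      · rw [le_div_iff₀ hδ0]; linarith
      · rw [div_le_iff₀ hδ0]; linarith
  · obtain ⟨⟨h1, h2⟩, h3, h4⟩ := key a₁ ha₁ a₀ ha₀ hlt
    have hδ0 : (0:ℝ) < a₀ - a₁ := by linarith
    have hswap : ∀ x y : ℝ, (x - y) / (a₁ - a₀) = (y - x) / (a₀ - a₁) := by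
      intro x y
      rw [← neg_div_neg_eq, neg_sub, neg_sub]
    rw [hswap, hswap]
    constructor
    · constructor
      · rw [le_div_iff₀ hδ0]; linarith
      · rw [div_le_iff₀ hδ0]; linarith
    · constructor
      · rw [le_div_iff₀ hδ0]; linarith
      · rw [div_le_iff₀ hδ0]; linarith
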